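/- In the binary nuisance setting (see context), assume additionally π ≥ ε almost surely. Then there exists a constant c depending only on B and ε such that ‖[(T/π̂)(Y − μ̂) + μ̂] − [(T/π)(Y − μ) + μ]‖_{L²(P)} ≤ c·(‖μ̂ − μ‖_{L²(P)} + ‖π̂ − π‖_{L²(P)}) and ‖[2μ̂(T/π̂)(Y − μ̂) + μ̂²] − [2μ(T/π)(Y − μ) + μ²]‖_{L²(P)} ≤ c·(‖μ̂ − μ‖_{L²(P)} + ‖π̂ − π‖_{L²(P)}). -/

import Mathlib

open MeasureTheory
open scoped ENNReal

/-- The `L²(P)` norm of a real random variable, `‖W‖_{L²(P)} = (E W²)^{1/2}`. -/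
noncomputable def l2norm {Ω : Type*} {m : MeasurableSpace Ω} (P : Measure Ω) (f : Ω → ℝ) : ℝ :=
  Real.sqrt (∫ ω, (f ω) ^ 2 ∂P)

lemma l2norm_eq_eLpNorm {Ω : Type*} {m : MeasurableSpace Ω} {P : Measure Ω} {f : Ω → ℝ}
    (hf : MemLp f 2 P) : l2norm P f = (eLpNorm f 2 P).toReal := by
  rw [hf.eLpNorm_eq_integral_rpow_norm (by norm_num) (by norm_num)]
  rw [ENNReal.toReal_ofReal (by positivity)]
  have h2 : (2 : ℝ≥0∞).toReal = (2 : ℝ) := by norm_num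
  rw [h2]
  have : (∫ a, ‖f a‖ ^ (2:ℝ) ∂P) = ∫ ω, (f ω) ^ 2 ∂P := by
    refine integral_congr_ae (Filter.Eventually.of_forall fun ω => ?_)
    rw [show (2:ℝ) = ((2:ℕ):ℝ) by norm_num]
    simp only [Real.rpow_natCast]
    simp [sq_abs]
  rw [this, l2norm, Real.sqrt_eq_rpow]
  norm_num

lemma l2_key {Ω : Type*} {m : MeasurableSpace Ω} (P : Measure Ω) [IsProbabilityMeasure P]
    (f u v : Ω → ℝ) (C M : ℝ) (hC : 0 ≤ C)
    (hf : AEStronglyMeasurable f P) (hu : AEStronglyMeasurable u P)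
    (hv : AEStronglyMeasurable v P)
    (hbu : ∀ᵐ ω ∂P, |u ω| ≤ M) (hbv : ∀ᵐ ω ∂P, |v ω| ≤ M)
    (hb : ∀ᵐ ω ∂P, |f ω| ≤ C * (|u ω| + |v ω|)) :
    l2norm P f ≤ C * (l2norm P u + l2norm P v) := by
  have hMu : MemLp u 2 P := MemLp.of_bound hu M (hbu.mono fun ω h => by simpa using h)
  have hMv : MemLp v 2 P := MemLp.of_bound hv M (hbv.mono fun ω h => by simpa using h)
  have hMf : MemLp f 2 P := by
    refine MemLp.of_bound hf (C * (M + M)) ?_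
    filter_upwards [hb, hbu, hbv] with ω h1 h2 h3
    simp only [Real.norm_eq_abs]
    refine h1.trans ?_
    have := mul_le_mul_of_nonneg_left (add_le_add h2 h3) hC
    linarith
  have habs : eLpNorm f 2 P ≤ eLpNorm (fun ω => C * (|u ω| + |v ω|)) 2 P := by
    refine eLpNorm_mono_ae ?_
    filter_upwards [hb] with ω h1
    simp only [Real.norm_eq_abs]
    refine h1.trans (le_abs_self _)
  have hsmul : eLpNorm (fun ω => C * (|u ω| + |v ω|)) 2 P
      = ‖C‖₊ * eLpNorm (fun ω => |u ω| + |v ω|) 2 P := by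
    have := eLpNorm_const_smul (𝕜 := ℝ) C (fun ω => |u ω| + |v ω|) 2 P
    exact this
  have hadd : eLpNorm (fun ω => |u ω| + |v ω|) 2 P
      ≤ eLpNorm u 2 P + eLpNorm v 2 P := by
    have h := eLpNorm_add_le (μ := P) (p := 2) hu.norm hv.norm (by norm_num)
    calc eLpNorm (fun ω => |u ω| + |v ω|) 2 P
        = eLpNorm ((fun ω => ‖u ω‖) + (fun ω => ‖v ω‖)) 2 P := by
          congr 1
      _ ≤ eLpNorm (fun ω => ‖u ω‖) 2 P + eLpNorm (fun ω => ‖v ω‖) 2 P := h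
      _ = eLpNorm u 2 P + eLpNorm v 2 P := by rw [eLpNorm_norm, eLpNorm_norm]
  have hfin : eLpNorm u 2 P + eLpNorm v 2 P ≠ ⊤ :=
    (ENNReal.add_lt_top.2 ⟨hMu.2, hMv.2⟩).ne
  rw [l2norm_eq_eLpNorm hMf, l2norm_eq_eLpNorm hMu, l2norm_eq_eLpNorm hMv]
  have hle : eLpNorm f 2 P ≤ ‖C‖₊ * (eLpNorm u 2 P + eLpNorm v 2 P) := by
    refine habs.trans ?_
    rw [hsmul]
    exact mul_le_mul_right hadd _
  have hrhs : (‖C‖₊ : ℝ≥0∞) * (eLpNorm u 2 P + eLpNorm v 2 P) ≠ ⊤ :=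
    ENNReal.mul_ne_top (by simp) hfin
  calc (eLpNorm f 2 P).toReal ≤ ((‖C‖₊ : ℝ≥0∞) * (eLpNorm u 2 P + eLpNorm v 2 P)).toReal :=
        ENNReal.toReal_mono hrhs hle
    _ = C * ((eLpNorm u 2 P).toReal + (eLpNorm v 2 P).toReal) := by
        rw [ENNReal.toReal_mul, ENNReal.toReal_add hMu.2.ne hMv.2.ne]
        simp [abs_of_nonneg hC]

-- pointwise bounds
lemma pt1 (B ε t y p q m n : ℝ) (hB : 0 < B) (hε : 0 < ε) (ht : t = 0 ∨ t = 1)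
    (hy : |y| ≤ B) (hp : ε ≤ p) (hp1 : p ≤ 1) (hq : ε ≤ q) (hq1 : q ≤ 1)
    (hm : |m| ≤ B) (hn : |n| ≤ B) :
    |((t / q) * (y - n) + n) - ((t / p) * (y - m) + m)|
      ≤ (1 + 6 * B + 4 * B ^ 2) * (1 + 1 / ε + 1 / ε ^ 2) * (|n - m| + |q - p|) := by
  have hp0 : 0 < p := lt_of_lt_of_le hε hp
  have hq0 : 0 < q := lt_of_lt_of_le hε hq
  have hc1 : (1 : ℝ) + 1 / ε ^ 2 ≤ (1 + 6 * B + 4 * B ^ 2) * (1 + 1 / ε + 1 / ε ^ 2) := by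
    have h1 : (0:ℝ) < 1 / ε := by positivity
    have h2 : (0:ℝ) < 1 / ε ^ 2 := by positivity
    nlinarith [sq_nonneg B, mul_pos hB h1, mul_pos hB h2, mul_pos (mul_pos hB hB) h2]
  have hc2 : 2 * B / ε ^ 2 ≤ (1 + 6 * B + 4 * B ^ 2) * (1 + 1 / ε + 1 / ε ^ 2) := by
    have h2 : (0:ℝ) < 1 / ε ^ 2 := by positivity
    have he : 2 * B / ε ^ 2 = 2 * B * (1 / ε ^ 2) := by ring
    rw [he]
    have h1 : (0:ℝ) < 1 / ε := by positivity
    nlinarith [mul_pos hB h1, mul_pos hB h2, mul_pos (mul_pos hB hB) h2, mul_pos hB hB]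
  rcases ht with ht | ht
  · subst ht
    simp only [zero_div, zero_mul, zero_add]
    have h0 : |n - m| ≤ (1 + 1 / ε ^ 2) * (|n - m| + |q - p|) := by
      have h2 : (0:ℝ) ≤ 1 / ε ^ 2 := by positivity
      nlinarith [abs_nonneg (n - m), abs_nonneg (q - p)]
    calc |n - m|
        ≤ (1 + 1 / ε ^ 2) * (|n - m| + |q - p|) := h0
      _ ≤ _ := by
          refine mul_le_mul_of_nonneg_right hc1 (by positivity)
  · subst ht
    have key : (1 / q) * (y - n) + n - ((1 / p) * (y - m) + m)
        = ((y - m) * (p - q) + p * (m - n)) / (q * p) + (n - m) := by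
      field_simp
      ring
    rw [key]
    have h1 : |((y - m) * (p - q) + p * (m - n)) / (q * p)|
        ≤ (2 * B * |q - p| + |n - m|) / ε ^ 2 := by
      rw [abs_div, abs_of_pos (mul_pos hq0 hp0)]
      have hnum : |(y - m) * (p - q) + p * (m - n)| ≤ 2 * B * |q - p| + 1 * |n - m| := by
        calc |(y - m) * (p - q) + p * (m - n)| ≤ |(y - m) * (p - q)| + |p * (m - n)| :=
              abs_add_le _ _
          _ = |y - m| * |p - q| + |p| * |m - n| := by rw [abs_mul, abs_mul]
          _ ≤ 2 * B * |q - p| + 1 * |n - m| := by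
              rw [abs_sub_comm p q, abs_sub_comm m n]
              refine add_le_add (mul_le_mul_of_nonneg_right ?_ (abs_nonneg _))
                (mul_le_mul_of_nonneg_right ?_ (abs_nonneg _))
              · calc |y - m| ≤ |y| + |m| := abs_sub _ _
                  _ ≤ 2 * B := by linarith
              · rw [abs_of_pos hp0]; exact hp1
      have hden : ε ^ 2 ≤ q * p := by rw [sq]; exact mul_le_mul hq hp hε.le (hε.le.trans hq)
      have h3 : |(y - m) * (p - q) + p * (m - n)| ≤ 2 * B * |q - p| + |n - m| := by
        linarith
      exact div_le_div₀ (by positivity) h3 (by positivity) hden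
    calc |((y - m) * (p - q) + p * (m - n)) / (q * p) + (n - m)|
        ≤ |((y - m) * (p - q) + p * (m - n)) / (q * p)| + |n - m| := abs_add_le _ _
      _ ≤ (2 * B * |q - p| + |n - m|) / ε ^ 2 + |n - m| := by linarith
      _ = (2 * B / ε ^ 2) * |q - p| + (1 + 1 / ε ^ 2) * |n - m| := by ring
      _ ≤ (1 + 6 * B + 4 * B ^ 2) * (1 + 1 / ε + 1 / ε ^ 2) * (|n - m| + |q - p|) := by
          have k1 := mul_le_mul_of_nonneg_right hc1 (abs_nonneg (n - m))
          have k2 := mul_le_mul_of_nonneg_right hc2 (abs_nonneg (q - p))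
          linarith

lemma pt2 (B ε t y p q m n : ℝ) (hB : 0 < B) (hε : 0 < ε) (ht : t = 0 ∨ t = 1)
    (hy : |y| ≤ B) (hp : ε ≤ p) (hp1 : p ≤ 1) (hq : ε ≤ q) (hq1 : q ≤ 1)
    (hm : |m| ≤ B) (hn : |n| ≤ B) :
    |(2 * n * (t / q) * (y - n) + n ^ 2) - (2 * m * (t / p) * (y - m) + m ^ 2)|
      ≤ (1 + 6 * B + 4 * B ^ 2) * (1 + 1 / ε + 1 / ε ^ 2) * (|n - m| + |q - p|) := by
  have hp0 : 0 < p := lt_of_lt_of_le hε hp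
  have hq0 : 0 < q := lt_of_lt_of_le hε hq
  have ha : (0:ℝ) < 1 / ε := by positivity
  have ha2 : (0:ℝ) < 1 / ε ^ 2 := by positivity
  have hc3 : 6 * B / ε ^ 2 + 2 * B ≤ (1 + 6 * B + 4 * B ^ 2) * (1 + 1 / ε + 1 / ε ^ 2) := by
    have he : 6 * B / ε ^ 2 = 6 * B * (1 / ε ^ 2) := by ring
    rw [he]
    nlinarith [mul_pos hB ha2, mul_pos (mul_pos hB hB) ha2, mul_pos hB ha,
      mul_pos (mul_pos hB hB) ha, mul_pos hB hB]
  have hc4 : 4 * B ^ 2 / ε ^ 2 ≤ (1 + 6 * B + 4 * B ^ 2) * (1 + 1 / ε + 1 / ε ^ 2) := by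
    have he : 4 * B ^ 2 / ε ^ 2 = 4 * B ^ 2 * (1 / ε ^ 2) := by ring
    rw [he]
    nlinarith [mul_pos hB ha2, mul_pos (mul_pos hB hB) ha2, mul_pos hB ha,
      mul_pos (mul_pos hB hB) ha, mul_pos hB hB]
  have hn2 : |n ^ 2 - m ^ 2| ≤ 2 * B * |n - m| := by
    have : n ^ 2 - m ^ 2 = (n + m) * (n - m) := by ring
    rw [this, abs_mul]
    have h1 : |n + m| ≤ 2 * B := by
      calc |n + m| ≤ |n| + |m| := abs_add_le _ _
        _ ≤ 2 * B := by linarith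
    exact mul_le_mul_of_nonneg_right h1 (abs_nonneg _)
  rcases ht with ht | ht
  · subst ht
    simp only [zero_div, mul_zero, zero_mul, zero_add]
    have h2B : 2 * B ≤ (1 + 6 * B + 4 * B ^ 2) * (1 + 1 / ε + 1 / ε ^ 2) := by
      nlinarith [mul_pos hB ha2, mul_pos (mul_pos hB hB) ha2, mul_pos hB ha,
        mul_pos (mul_pos hB hB) ha, mul_pos hB hB]
    calc |n ^ 2 - m ^ 2| ≤ 2 * B * |n - m| := hn2
      _ ≤ (1 + 6 * B + 4 * B ^ 2) * (1 + 1 / ε + 1 / ε ^ 2) * (|n - m| + |q - p|) := by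
          nlinarith [abs_nonneg (n - m), abs_nonneg (q - p),
            mul_le_mul_of_nonneg_right h2B (abs_nonneg (n - m))]
  · subst ht
    have key : (2 * n * (1 / q) * (y - n) + n ^ 2) - (2 * m * (1 / p) * (y - m) + m ^ 2)
        = (2 * n * p * (y - n) - 2 * m * q * (y - m)) / (q * p) + (n ^ 2 - m ^ 2) := by
      field_simp
      ring
    rw [key]
    have hyn : |y - n| ≤ 2 * B := by
      calc |y - n| ≤ |y| + |n| := abs_sub _ _
        _ ≤ 2 * B := by linarith
    have hpa : |p| ≤ 1 := by rw [abs_of_pos hp0]; exact hp1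
    have e1 : |2 * (n - m) * p * (y - n)| ≤ 4 * B * |n - m| := by
      calc |2 * (n - m) * p * (y - n)| = 2 * |n - m| * |p| * |y - n| := by
            rw [abs_mul, abs_mul, abs_mul, abs_two]
        _ ≤ 2 * |n - m| * 1 * (2 * B) := by
            gcongr
        _ = 4 * B * |n - m| := by ring
    have hinner : |(y - m) * (p - q) + p * (m - n)| ≤ 2 * B * |q - p| + |n - m| := by
      calc |(y - m) * (p - q) + p * (m - n)| ≤ |(y - m) * (p - q)| + |p * (m - n)| :=
            abs_add_le _ _
        _ = |y - m| * |p - q| + |p| * |m - n| := by rw [abs_mul, abs_mul]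
        _ ≤ 2 * B * |q - p| + 1 * |n - m| := by
            rw [abs_sub_comm p q, abs_sub_comm m n]
            refine add_le_add (mul_le_mul_of_nonneg_right ?_ (abs_nonneg _))
              (mul_le_mul_of_nonneg_right hpa (abs_nonneg _))
            calc |y - m| ≤ |y| + |m| := abs_sub _ _
              _ ≤ 2 * B := by linarith
        _ = 2 * B * |q - p| + |n - m| := by ring
    have e2 : |2 * m * ((y - m) * (p - q) + p * (m - n))|
        ≤ 4 * B ^ 2 * |q - p| + 2 * B * |n - m| := by
      calc |2 * m * ((y - m) * (p - q) + p * (m - n))|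
          = 2 * |m| * |(y - m) * (p - q) + p * (m - n)| := by
            rw [abs_mul, abs_mul, abs_two]
        _ ≤ 2 * B * (2 * B * |q - p| + |n - m|) := by
            have h4 := mul_le_mul hm hinner (abs_nonneg _) hB.le
            linarith
        _ = 4 * B ^ 2 * |q - p| + 2 * B * |n - m| := by ring
    have hdecomp : 2 * n * p * (y - n) - 2 * m * q * (y - m)
        = 2 * (n - m) * p * (y - n) + 2 * m * ((y - m) * (p - q) + p * (m - n)) := by ring
    have hN : |2 * n * p * (y - n) - 2 * m * q * (y - m)|
        ≤ 6 * B * |n - m| + 4 * B ^ 2 * |q - p| := by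
      rw [hdecomp]
      calc |2 * (n - m) * p * (y - n) + 2 * m * ((y - m) * (p - q) + p * (m - n))|
          ≤ |2 * (n - m) * p * (y - n)| + |2 * m * ((y - m) * (p - q) + p * (m - n))| :=
            abs_add_le _ _
        _ ≤ 6 * B * |n - m| + 4 * B ^ 2 * |q - p| := by linarith
    have hden : ε ^ 2 ≤ q * p := by rw [sq]; exact mul_le_mul hq hp hε.le (hε.le.trans hq)
    have hdiv : |(2 * n * p * (y - n) - 2 * m * q * (y - m)) / (q * p)|
        ≤ (6 * B * |n - m| + 4 * B ^ 2 * |q - p|) / ε ^ 2 := by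
      rw [abs_div, abs_of_pos (mul_pos hq0 hp0)]
      exact div_le_div₀ (by positivity) hN (by positivity) hden
    calc |(2 * n * p * (y - n) - 2 * m * q * (y - m)) / (q * p) + (n ^ 2 - m ^ 2)|
        ≤ |(2 * n * p * (y - n) - 2 * m * q * (y - m)) / (q * p)| + |n ^ 2 - m ^ 2| :=
          abs_add_le _ _
      _ ≤ (6 * B * |n - m| + 4 * B ^ 2 * |q - p|) / ε ^ 2 + 2 * B * |n - m| := by linarith
      _ = (6 * B / ε ^ 2 + 2 * B) * |n - m| + (4 * B ^ 2 / ε ^ 2) * |q - p| := by ring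
      _ ≤ (1 + 6 * B + 4 * B ^ 2) * (1 + 1 / ε + 1 / ε ^ 2) * (|n - m| + |q - p|) := by
          have k1 := mul_le_mul_of_nonneg_right hc3 (abs_nonneg (n - m))
          have k2 := mul_le_mul_of_nonneg_right hc4 (abs_nonneg (q - p))
          linarith

theorem stmt_10 (B ε : ℝ) (hB : 0 < B) (hε : 0 < ε) :
    ∃ c : ℝ, 0 ≤ c ∧
      ∀ (Ω : Type) (m0 : MeasurableSpace Ω) (P : Measure Ω), IsProbabilityMeasure P →
      ∀ 𝔊 : MeasurableSpace Ω, 𝔊 ≤ m0 →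
      ∀ T Y : Ω → ℝ, Measurable T → (∀ ω, T ω = 0 ∨ T ω = 1) →
      Measurable Y → (∀ᵐ ω ∂P, |Y ω| ≤ B) →
      ∀ π μ : Ω → ℝ,
      Measurable[𝔊] π → π =ᵐ[P] P[T|𝔊] → (∀ᵐ ω ∂P, ε ≤ π ω) →
      Measurable[𝔊] μ → (∀ᵐ ω ∂P, |μ ω| ≤ B) →
      ((fun ω => π ω * μ ω) =ᵐ[P] P[fun ω => T ω * Y ω|𝔊]) →
      ∀ μh πh : Ω → ℝ, Measurable[𝔊] μh → Measurable[𝔊] πh →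
      (∀ᵐ ω ∂P, |μh ω| ≤ B) → (∀ᵐ ω ∂P, ε ≤ πh ω ∧ πh ω ≤ 1) →
      l2norm P (fun ω =>
          ((T ω / πh ω) * (Y ω - μh ω) + μh ω) - ((T ω / π ω) * (Y ω - μ ω) + μ ω)) ≤
        c * (l2norm P (fun ω => μh ω - μ ω) + l2norm P (fun ω => πh ω - π ω)) ∧
      l2norm P (fun ω =>
          (2 * μh ω * (T ω / πh ω) * (Y ω - μh ω) + μh ω ^ 2) -
            (2 * μ ω * (T ω / π ω) * (Y ω - μ ω) + μ ω ^ 2)) ≤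
        c * (l2norm P (fun ω => μh ω - μ ω) + l2norm P (fun ω => πh ω - π ω)) := by
  refine ⟨(1 + 6 * B + 4 * B ^ 2) * (1 + 1 / ε + 1 / ε ^ 2), by positivity, ?_⟩
  intro Ω m0 P hP 𝔊 h𝔊 T Y hTm hT01 hYm hYB π μ hπm hπce hπε hμm hμB _hmoment
    μh πh hμhm hπhm hμhB hπhb
  haveI := hP
  -- π ≤ 1 a.e.
  have hT1 : ∀ᵐ ω ∂P, |T ω| ≤ ((1 : NNReal) : ℝ) := by
    refine Filter.Eventually.of_forall fun ω => ?_
    rcases hT01 ω with h | h <;> rw [h] <;> norm_num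
  have hπ1 : ∀ᵐ ω ∂P, π ω ≤ 1 := by
    have hbd := ae_bdd_condExp_of_ae_bdd (μ := P) (m := 𝔊) hT1
    filter_upwards [hπce, hbd] with ω h1 h2
    rw [h1]
    calc (P[T|𝔊]) ω ≤ |(P[T|𝔊]) ω| := le_abs_self _
      _ ≤ 1 := by exact_mod_cast h2
  -- measurability
  have hTm0 : Measurable[m0] T := fun s hs => h𝔊 _ (hTm hs)
  have hYm0 : Measurable[m0] Y := fun s hs => h𝔊 _ (hYm hs)
  have hπM : Measurable[m0] π := fun s hs => h𝔊 _ (hπm hs)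
  have hμM : Measurable[m0] μ := fun s hs => h𝔊 _ (hμm hs)
  have hμhM : Measurable[m0] μh := fun s hs => h𝔊 _ (hμhm hs)
  have hπhM : Measurable[m0] πh := fun s hs => h𝔊 _ (hπhm hs)
  have hf1 : Measurable[m0] fun ω =>
      ((T ω / πh ω) * (Y ω - μh ω) + μh ω) - ((T ω / π ω) * (Y ω - μ ω) + μ ω) := by
    exact (((hTm0.div hπhM).mul (hYm0.sub hμhM)).add hμhM).sub
      (((hTm0.div hπM).mul (hYm0.sub hμM)).add hμM)
  have hf2 : Measurable[m0] fun ω =>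
      (2 * μh ω * (T ω / πh ω) * (Y ω - μh ω) + μh ω ^ 2) -
        (2 * μ ω * (T ω / π ω) * (Y ω - μ ω) + μ ω ^ 2) := by
    exact ((((measurable_const.mul hμhM).mul (hTm0.div hπhM)).mul (hYm0.sub hμhM)).add
        (hμhM.pow_const 2)).sub
      ((((measurable_const.mul hμM).mul (hTm0.div hπM)).mul (hYm0.sub hμM)).add
        (hμM.pow_const 2))
  have hu : Measurable[m0] fun ω => μh ω - μ ω := hμhM.sub hμM
  have hv : Measurable[m0] fun ω => πh ω - π ω := hπhM.sub hπM
  have hbu : ∀ᵐ ω ∂P, |μh ω - μ ω| ≤ 2 * B + 2 := by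
    filter_upwards [hμB, hμhB] with ω h1 h2
    calc |μh ω - μ ω| ≤ |μh ω| + |μ ω| := abs_sub _ _
      _ ≤ 2 * B + 2 := by linarith
  have hbv : ∀ᵐ ω ∂P, |πh ω - π ω| ≤ 2 * B + 2 := by
    filter_upwards [hπε, hπ1, hπhb] with ω h1 h2 h3
    have : |πh ω - π ω| ≤ |πh ω| + |π ω| := abs_sub _ _
    rw [abs_of_pos (lt_of_lt_of_le hε h3.1), abs_of_pos (lt_of_lt_of_le hε h1)] at this
    nlinarith
  constructor
  · refine l2_key P _ _ _ _ (2 * B + 2) (by positivity)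
      hf1.aestronglyMeasurable hu.aestronglyMeasurable hv.aestronglyMeasurable
      hbu hbv ?_
    filter_upwards [hYB, hπε, hπ1, hμB, hμhB, hπhb] with ω h1 h2 h3 h4 h5 h6
    exact pt1 B ε (T ω) (Y ω) (π ω) (πh ω) (μ ω) (μh ω) hB hε (hT01 ω)
      h1 h2 h3 h6.1 h6.2 h4 h5
  · refine l2_key P _ _ _ _ (2 * B + 2) (by positivity)
      hf2.aestronglyMeasurable hu.aestronglyMeasurable hv.aestronglyMeasurable
      hbu hbv ?_
    filter_upwards [hYB, hπε, hπ1, hμB, hμhB, hπhb] with ω h1 h2 h3 h4 h5 h6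
    exact pt2 B ε (T ω) (Y ω) (π ω) (πh ω) (μ ω) (μh ω) hB hε (hT01 ω)
      h1 h2 h3 h6.1 h6.2 h4 h5
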